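/- For all real numbers p_1, p_2 with 0 < p_2 < p_1 < 1 and p_1 + p_2 < 1, the Bernoulli KL divergence satisfies D(p_1 ‖ p_2) < (p_1 − p_2) · log(p_1/p_2), where D(p_1 ‖ p_2) = p_1 log(p_1/p_2) + (1 − p_1) log((1 − p_1)/(1 − p_2)). -/

import Mathlib

open Real

/-- `D(p₁ ‖ p₂) < (p₁ − p₂) log(p₁/p₂)` for `0 < p₂ < p₁ < 1`, `p₁+p₂ < 1`. -/
theorem stmt_2 (p₁ p₂ : ℝ) (h2 : 0 < p₂) (h21 : p₂ < p₁) (h1 : p₁ < 1)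
    (hsum : p₁ + p₂ < 1) :
    p₁ * Real.log (p₁ / p₂) + (1 - p₁) * Real.log ((1 - p₁) / (1 - p₂)) <
      (p₁ - p₂) * Real.log (p₁ / p₂) := by
  have hp1 : 0 < p₁ := lt_trans h2 h21
  have hp1' : 0 < 1 - p₁ := by linarith
  have hp2' : 0 < 1 - p₂ := by linarith
  set g : ℝ → ℝ := fun x =>
    x * (Real.log x - Real.log p₁) + (1 - p₁) * (Real.log (1 - x) - Real.log (1 - p₁)) with hg
  set c : ℝ := min p₁ (1 - p₁) with hc
  have hp2c : p₂ < c := lt_min h21 (by linarith)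
  have hc1 : c ≤ p₁ := min_le_left _ _
  have hc2 : c ≤ 1 - p₁ := min_le_right _ _
  have hcpos : 0 < c := lt_trans h2 hp2c
  have hderiv : ∀ x : ℝ, 0 < x → x < 1 →
      HasDerivAt g (Real.log x - Real.log p₁ + 1 - (1 - p₁) / (1 - x)) x := by
    intro x hx0 hx1
    have h1x : (0:ℝ) < 1 - x := by linarith
    have hlx : HasDerivAt (fun y : ℝ => Real.log (1 - y)) (-(1 / (1 - x))) x := by
      have := (Real.hasDerivAt_log (ne_of_gt h1x)).comp x
        ((hasDerivAt_const x (1:ℝ)).sub (hasDerivAt_id x))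
      simp only [Function.comp_def] at this; simpa using this
    have hmul : HasDerivAt (fun y : ℝ => y * Real.log y) (Real.log x + 1) x :=
      Real.hasDerivAt_mul_log (ne_of_gt hx0)
    have h1 : HasDerivAt (fun y : ℝ => y * (Real.log y - Real.log p₁))
        (Real.log x + 1 - Real.log p₁) x := by
      have := hmul.sub ((hasDerivAt_id x).const_mul (Real.log p₁))
      have h' : (fun y : ℝ => y * (Real.log y - Real.log p₁))
          = fun y : ℝ => y * Real.log y - Real.log p₁ * id y := by
        funext y; simp [id]; ring
      rw [h']
      exact this.congr_deriv (by ring)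
    have h2 : HasDerivAt (fun y : ℝ => (1 - p₁) * (Real.log (1 - y) - Real.log (1 - p₁)))
        ((1 - p₁) * (-(1 / (1 - x)))) x := by
      simpa using ((hlx.sub (hasDerivAt_const x (Real.log (1 - p₁))))).const_mul (1 - p₁)
    have := h1.add h2
    exact this.congr_deriv (by ring)
  have hanti : StrictAntiOn g (Set.Icc p₂ c) := by
    apply strictAntiOn_of_deriv_neg (convex_Icc _ _)
    · intro x hx
      have hx0 : 0 < x := lt_of_lt_of_le h2 hx.1
      have hx1 : x < 1 := lt_of_le_of_lt hx.2 (by linarith : c < 1)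
      exact (hderiv x hx0 hx1).continuousAt.continuousWithinAt
    · intro x hx
      rw [interior_Icc] at hx
      have hx0 : 0 < x := lt_trans h2 hx.1
      have hxp1 : x < p₁ := lt_of_lt_of_le hx.2 hc1
      have hxp1' : x < 1 - p₁ := lt_of_lt_of_le hx.2 hc2
      have hx1 : x < 1 := by linarith
      have h1x : (0:ℝ) < 1 - x := by linarith
      rw [(hderiv x hx0 hx1).deriv]
      have hlog : Real.log x - Real.log p₁ < x / p₁ - 1 := by
        rw [← Real.log_div (ne_of_gt hx0) (ne_of_gt hp1)]
        exact Real.log_lt_sub_one_of_pos (div_pos hx0 hp1) (by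
          intro h
          have := (div_eq_one_iff_eq (ne_of_gt hp1)).mp h
          linarith)
      have hkey : x / p₁ < (1 - p₁) / (1 - x) := by
        rw [div_lt_div_iff₀ hp1 h1x]
        nlinarith
      linarith
  have hgc : g c = 0 := by
    rcases le_total p₁ (1 - p₁) with h | h
    · have : c = p₁ := min_eq_left h
      rw [this]; simp [hg]
    · have : c = 1 - p₁ := min_eq_right h
      rw [this]; simp only [hg]; ring
  have hgp2 : 0 < g p₂ := by
    have := hanti (Set.left_mem_Icc.mpr (le_of_lt hp2c))
      (Set.right_mem_Icc.mpr (le_of_lt hp2c)) hp2c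
    rw [hgc] at this
    exact this
  simp only [hg] at hgp2
  rw [Real.log_div (ne_of_gt hp1) (ne_of_gt h2),
    Real.log_div (ne_of_gt hp1') (ne_of_gt hp2')]
  linarith
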